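/- Let F₀ be a field of characteristic 0 with normalized discrete valuation v, valuation ring O₀, uniformizer π₀, and residue field of characteristic 2 (so v(2) ≥ 1). Let t ∈ O₀ with π₀ ∣ t and t ∣ 2, let F := F₀[X]/(X² − t·X + π₀) (a field, since X² − tX + π₀ is Eisenstein over O₀), let π be the class of X, let σ be the nontrivial F₀-automorphism of F (so σ(π) = t − π), and let N_{F/F₀}(λ) := λ·σ(λ) ∈ F₀ be the norm. Then for every λ ∈ F with λ + σ(λ) = 1 one has v(N_{F/F₀}(λ)) ≤ 1 − 2·v(t); moreover λ₀ := (t − π)/t satisfies λ₀ + σ(λ₀) = 1 and v(N_{F/F₀}(λ₀)) = 1 − 2·v(t). -/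

import Mathlib

open Polynomial

section AuxVal

variable {F₀ : Type*} [Field F₀] [CharZero F₀] (v : F₀ → ℤ)
  (hv_mul : ∀ a b : F₀, a ≠ 0 → b ≠ 0 → v (a * b) = v a + v b)
  (hv_add : ∀ a b : F₀, a ≠ 0 → b ≠ 0 → a + b ≠ 0 → min (v a) (v b) ≤ v (a + b))

include hv_mul

lemma aux_v_one : v 1 = 0 := by
  have := hv_mul 1 1 one_ne_zero one_ne_zero
  simp only [mul_one] at this; omega

lemma aux_v_neg (x : F₀) (hx : x ≠ 0) : v (-x) = v x := by
  have hm1 : v (-1 : F₀) = 0 := by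
    have := hv_mul (-1) (-1) (by norm_num) (by norm_num)
    rw [neg_mul_neg, one_mul, aux_v_one v hv_mul] at this; omega
  have := hv_mul (-1) x (by norm_num) hx
  rw [neg_one_mul, hm1] at this; omega

lemma aux_v_inv (x : F₀) (hx : x ≠ 0) : v x⁻¹ = - v x := by
  have := hv_mul x x⁻¹ hx (inv_ne_zero hx)
  rw [mul_inv_cancel₀ hx, aux_v_one v hv_mul] at this; omega

include hv_add

lemma aux_v_add_ne (x y : F₀) (hx : x ≠ 0) (hy : y ≠ 0) (hne : v x ≠ v y) :
    v (x + y) = min (v x) (v y) := by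
  have hs : x + y ≠ 0 := by
    intro h
    have hyx : y = -x := by linear_combination h
    rw [hyx, aux_v_neg v hv_mul x hx] at hne
    exact hne rfl
  have h1 := hv_add x y hx hy hs
  rcases lt_or_gt_of_ne hne with h | h
  · have h2 := hv_add (x + y) (-y) hs (neg_ne_zero.2 hy)
      (by rw [add_neg_cancel_right]; exact hx)
    rw [add_neg_cancel_right, aux_v_neg v hv_mul y hy] at h2
    omega
  · have h2 := hv_add (x + y) (-x) hs (neg_ne_zero.2 hx)
      (by rw [show x + y + -x = y by ring]; exact hy)
    rw [show x + y + -x = y by ring, aux_v_neg v hv_mul x hx] at h2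
    omega

lemma aux_key (π₀ : F₀) (hπ₀_ne : π₀ ≠ 0) (hπ₀ : v π₀ = 1)
    (h2 : 1 ≤ v 2) (t : F₀) (ht_ne : t ≠ 0) (hπ₀t : 1 ≤ v t) (ht2 : v t ≤ v 2)
    (a b : F₀) (h1 : 2 * a + b * t = 1) :
    v (a - a ^ 2 + b ^ 2 * π₀) ≤ 1 - 2 * v t := by
  have two_ne : (2 : F₀) ≠ 0 := two_ne_zero
  have four_ne : ((2 : F₀) * 2) ≠ 0 := mul_ne_zero two_ne two_ne
  have v4 : v ((2 : F₀) * 2) = v 2 + v 2 := hv_mul 2 2 two_ne two_ne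
  by_cases hb : b = 0
  · subst hb
    have ha : a = 2⁻¹ := by field_simp; linear_combination h1
    have hc : a - a ^ 2 + (0 : F₀) ^ 2 * π₀ = ((2 : F₀) * 2)⁻¹ := by
      rw [ha]; field_simp; ring
    rw [hc, aux_v_inv v hv_mul _ four_ne, v4]
    omega
  -- b ≠ 0
  · have hvb2 : v (b ^ 2) = v b + v b := by
      rw [sq]; exact hv_mul b b hb hb
    have hY : v (b ^ 2 * π₀) = v b + v b + 1 := by
      rw [hv_mul _ _ (pow_ne_zero 2 hb) hπ₀_ne, hvb2, hπ₀]
    have hY0 : b ^ 2 * π₀ ≠ 0 := mul_ne_zero (pow_ne_zero 2 hb) hπ₀_ne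
    have hvu : v (b * t) = v b + v t := hv_mul b t hb ht_ne
    set u : F₀ := b * t with hu_def
    have hu : u ≠ 0 := mul_ne_zero hb ht_ne
    by_cases hu1 : u = 1
    · have ha : a = 0 := by
        rw [hu_def] at hu1
        linear_combination (2⁻¹ : F₀) * (h1 - hu1)
      have hvb : v b = -v t := by
        rw [hu1, aux_v_one v hv_mul] at hvu; omega
      have hc : a - a ^ 2 + b ^ 2 * π₀ = b ^ 2 * π₀ := by rw [ha]; ring
      rw [hc, hY]; omega
    by_cases hum1 : u = -1
    · have ha : a = 1 := by
        rw [hu_def] at hum1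
        linear_combination (2⁻¹ : F₀) * (h1 - hum1)
      have hvb : v b = -v t := by
        have : v (-1 : F₀) = 0 := by
          have := aux_v_neg v hv_mul 1 one_ne_zero
          rwa [aux_v_one v hv_mul] at this
        rw [hum1, this] at hvu; omega
      have hc : a - a ^ 2 + b ^ 2 * π₀ = b ^ 2 * π₀ := by rw [ha]; ring
      rw [hc, hY]; omega
    -- general case: u ≠ ±1
    · have h1u : (1 : F₀) - u ≠ 0 := sub_ne_zero.2 (Ne.symm hu1)
      have h2u : (1 : F₀) + u ≠ 0 := by
        intro h; exact hum1 (by linear_combination h)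
      have hc : a - a ^ 2 + b ^ 2 * π₀
          = ((1 - u) * (1 + u)) * ((2 : F₀) * 2)⁻¹ + b ^ 2 * π₀ := by
        have ha : a = (1 - u) * 2⁻¹ := by
          rw [hu_def]; field_simp; linear_combination h1
        rw [ha]; field_simp; ring
      have hX0 : ((1 - u) * (1 + u)) * ((2 : F₀) * 2)⁻¹ ≠ 0 :=
        mul_ne_zero (mul_ne_zero h1u h2u) (inv_ne_zero four_ne)
      have hvX : v (((1 - u) * (1 + u)) * ((2 : F₀) * 2)⁻¹)
          = v (1 - u) + v (1 + u) - (v 2 + v 2) := by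
        rw [hv_mul _ _ (mul_ne_zero h1u h2u) (inv_ne_zero four_ne),
          hv_mul _ _ h1u h2u, aux_v_inv v hv_mul _ four_ne, v4]
        ring
      -- valuation of 1 - u and 1 + u
      have hvnu : v (-u) = v u := aux_v_neg v hv_mul u hu
      have hv1 : v (1 : F₀) = 0 := aux_v_one v hv_mul
      rcases lt_trichotomy (v u) 0 with hvu0 | hvu0 | hvu0
      · -- v u < 0 : v(1±u) = v u
        have e1 : v (1 - u) = v u := by
          have := aux_v_add_ne v hv_mul hv_add 1 (-u) one_ne_zero (neg_ne_zero.2 hu)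
            (by rw [hv1, hvnu]; omega)
          rw [hv1, hvnu, ← sub_eq_add_neg] at this; omega
        have e2 : v (1 + u) = v u := by
          have := aux_v_add_ne v hv_mul hv_add 1 u one_ne_zero hu (by rw [hv1]; omega)
          rw [hv1] at this; omega
        have hne : v (((1 - u) * (1 + u)) * ((2 : F₀) * 2)⁻¹) ≠ v (b ^ 2 * π₀) := by
          rw [hvX, hY, e1, e2]; omega
        rw [hc, aux_v_add_ne v hv_mul hv_add _ _ hX0 hY0 hne, hvX, hY, e1, e2]
        omega
      · -- v u = 0
        have hvb : v b = -v t := by omega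
        have hm0 : 0 ≤ v (1 - u) := by
          have := hv_add 1 (-u) one_ne_zero (neg_ne_zero.2 hu)
            (by rw [← sub_eq_add_neg]; exact h1u)
          rw [hv1, hvnu, ← sub_eq_add_neg] at this; omega
        have h2u0 : (2 : F₀) * u ≠ 0 := mul_ne_zero two_ne hu
        have hv2u : v (2 * u) = v 2 := by rw [hv_mul 2 u two_ne hu]; omega
        have hsum : (1 : F₀) - u + 2 * u = 1 + u := by ring
        by_cases hm : v (1 - u) < v 2
        · have e2 : v (1 + u) = v (1 - u) := by
            have := aux_v_add_ne v hv_mul hv_add (1 - u) (2 * u) h1u h2u0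
              (by rw [hv2u]; omega)
            rw [hsum, hv2u] at this; omega
          have hne : v (((1 - u) * (1 + u)) * ((2 : F₀) * 2)⁻¹) ≠ v (b ^ 2 * π₀) := by
            rw [hvX, hY, e2]; omega
          rw [hc, aux_v_add_ne v hv_mul hv_add _ _ hX0 hY0 hne, hvX, hY, e2]
          omega
        · have e2 : v 2 ≤ v (1 + u) := by
            have := hv_add (1 - u) (2 * u) h1u h2u0 (by rw [hsum]; exact h2u)
            rw [hsum, hv2u] at this; omega
          have hne : v (((1 - u) * (1 + u)) * ((2 : F₀) * 2)⁻¹) ≠ v (b ^ 2 * π₀) := by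
            rw [hvX, hY]; omega
          rw [hc, aux_v_add_ne v hv_mul hv_add _ _ hX0 hY0 hne, hvX, hY]
          omega
      · -- v u > 0 : v(1±u) = 0
        have e1 : v (1 - u) = 0 := by
          have := aux_v_add_ne v hv_mul hv_add 1 (-u) one_ne_zero (neg_ne_zero.2 hu)
            (by rw [hv1, hvnu]; omega)
          rw [hv1, hvnu, ← sub_eq_add_neg] at this; omega
        have e2 : v (1 + u) = 0 := by
          have := aux_v_add_ne v hv_mul hv_add 1 u one_ne_zero hu (by rw [hv1]; omega)
          rw [hv1] at this; omega
        have hne : v (((1 - u) * (1 + u)) * ((2 : F₀) * 2)⁻¹) ≠ v (b ^ 2 * π₀) := by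
          rw [hvX, hY, e1, e2]; omega
        rw [hc, aux_v_add_ne v hv_mul hv_add _ _ hX0 hY0 hne, hvX, hY, e1, e2]
        omega

end AuxVal

/-- **(R-U) case of the Lemma on λ.** -/
theorem stmt_3 (F₀ : Type*) [Field F₀] [CharZero F₀]
    (v : F₀ → ℤ)
    (hv_mul : ∀ a b : F₀, a ≠ 0 → b ≠ 0 → v (a * b) = v a + v b)
    (hv_add : ∀ a b : F₀, a ≠ 0 → b ≠ 0 → a + b ≠ 0 → min (v a) (v b) ≤ v (a + b))
    (π₀ : F₀) (hπ₀_ne : π₀ ≠ 0) (hπ₀ : v π₀ = 1)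
    (h2 : 1 ≤ v 2)
    (t : F₀) (ht_ne : t ≠ 0) (hπ₀t : 1 ≤ v t) (ht2 : v t ≤ v 2)
    [hirr : Fact (Irreducible (X ^ 2 - C t * X + C π₀ : Polynomial F₀))]
    (σ : AdjoinRoot (X ^ 2 - C t * X + C π₀ : Polynomial F₀) →ₐ[F₀]
        AdjoinRoot (X ^ 2 - C t * X + C π₀ : Polynomial F₀))
    (hσ : σ (AdjoinRoot.root _) =
      algebraMap F₀ _ t - AdjoinRoot.root (X ^ 2 - C t * X + C π₀ : Polynomial F₀)) :
    (∀ lam : AdjoinRoot (X ^ 2 - C t * X + C π₀ : Polynomial F₀),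
      lam + σ lam = 1 →
      ∃ c : F₀, algebraMap F₀ _ c = lam * σ lam ∧ v c ≤ 1 - 2 * v t) ∧
    (((algebraMap F₀ _ t - AdjoinRoot.root (X ^ 2 - C t * X + C π₀ : Polynomial F₀)) /
          algebraMap F₀ _ t) +
        σ ((algebraMap F₀ _ t - AdjoinRoot.root (X ^ 2 - C t * X + C π₀ : Polynomial F₀)) /
          algebraMap F₀ _ t) = 1 ∧
      ∃ c : F₀,
        algebraMap F₀ _ c =
          ((algebraMap F₀ _ t - AdjoinRoot.root (X ^ 2 - C t * X + C π₀ : Polynomial F₀)) /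
              algebraMap F₀ _ t) *
            σ ((algebraMap F₀ _ t - AdjoinRoot.root (X ^ 2 - C t * X + C π₀ : Polynomial F₀)) /
              algebraMap F₀ _ t) ∧
        v c = 1 - 2 * v t) := by
  set q : Polynomial F₀ := X ^ 2 - C t * X + C π₀ with hq_def
  set A : F₀ →+* AdjoinRoot q := algebraMap F₀ (AdjoinRoot q) with hA_def
  have hmonic : q.Monic := by rw [hq_def]; monicity!
  have hdeg : q.degree = 2 := by rw [hq_def]; compute_degree!
  have hroot : (AdjoinRoot.root q) ^ 2 = A t * AdjoinRoot.root q - A π₀ := by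
    have h0 : aeval (AdjoinRoot.root q) (X ^ 2 - C t * X + C π₀) = 0 := by
      rw [← hq_def, AdjoinRoot.aeval_eq, AdjoinRoot.mk_self]
    simp only [map_add, map_sub, map_mul, map_pow, aeval_X, aeval_C] at h0
    linear_combination h0
  have Ainj : Function.Injective A := A.injective
  have hAt : A t ≠ 0 := fun h => ht_ne (Ainj (by rw [h, map_zero]))
  have hσA : ∀ x : F₀, σ (A x) = A x := fun x => σ.commutes x
  constructor
  · intro lam hlam
    obtain ⟨p, hp⟩ := AdjoinRoot.mk_surjective lam
    set r := p %ₘ q with hr_def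
    have hr : AdjoinRoot.mk q r = lam := by
      rw [hr_def, Polynomial.modByMonic_eq_sub_mul_div p q, map_sub, map_mul,
        AdjoinRoot.mk_self, zero_mul, sub_zero, hp]
    have hrdeg : r.degree ≤ 1 := by
      have h := Polynomial.degree_modByMonic_lt p hmonic
      rw [hdeg] at h
      exact Order.le_of_lt_succ (by exact_mod_cast h)
    set a := r.coeff 0 with ha_def
    set b := r.coeff 1 with hb_def
    have hrep : lam = A b * AdjoinRoot.root q + A a := by
      rw [← hr, eq_X_add_C_of_degree_le_one hrdeg, map_add, map_mul, AdjoinRoot.mk_C,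
        AdjoinRoot.mk_C, AdjoinRoot.mk_X, ← AdjoinRoot.algebraMap_eq]
    have hσlam : σ lam = A b * (A t - AdjoinRoot.root q) + A a := by
      rw [hrep, map_add, map_mul, hσA, hσA, hσ]
    have h1 : 2 * a + b * t = 1 := by
      apply Ainj
      have : A (2 * a + b * t) = lam + σ lam := by
        rw [hσlam, hrep]
        simp only [map_add, map_mul, map_ofNat]
        ring
      rw [this, hlam, map_one]
    refine ⟨a - a ^ 2 + b ^ 2 * π₀, ?_,
      aux_key v hv_mul hv_add π₀ hπ₀_ne hπ₀ h2 t ht_ne hπ₀t ht2 a b h1⟩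
    have h1' : 2 * A a + A b * A t = 1 := by
      have := congrArg A h1
      simpa only [map_add, map_mul, map_ofNat, map_one] using this
    rw [hσlam, hrep]
    simp only [map_add, map_sub, map_mul, map_pow]
    linear_combination (A b) ^ 2 * hroot - (A a) * h1'
  · have hsl : σ ((A t - AdjoinRoot.root q) / A t) = AdjoinRoot.root q / A t := by
      rw [map_div₀, map_sub, hσA, hσ]
      congr 1
      ring
    constructor
    · rw [hsl, ← add_div, sub_add_cancel, div_self hAt]
    · refine ⟨π₀ / t ^ 2, ?_, ?_⟩
      · rw [hsl, map_div₀, map_pow, div_mul_div_comm]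
        congr 1
        · linear_combination hroot
        · ring
      · have ht2ne : t ^ 2 ≠ 0 := pow_ne_zero 2 ht_ne
        rw [div_eq_mul_inv, hv_mul π₀ _ hπ₀_ne (inv_ne_zero ht2ne),
          aux_v_inv v hv_mul _ ht2ne, hπ₀]
        have : v (t ^ 2) = v t + v t := by rw [sq]; exact hv_mul t t ht_ne ht_ne
        omega
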